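/- Let p > 1, A > 0, B > 0 and 0 < t* < ∞. Suppose Φ : [0, t*) → ℝ is differentiable, Φ(t) > 0 for all t ∈ [0, t*), Φ(0) = Φ₀ > 0, Φ'(t) ≤ 2AΦ(t)^p + BΦ(t) for all t ∈ [0, t*), and Φ(t) → +∞ as t → t*⁻. Then t* ≥ T, where T = (1/(B(p−1))) · ln(1 + (B/(2A)) · Φ₀^{1−p}). -/

import Mathlib

open Filter Set

/-- ODE core of Theorem 1 (lower bound for the blow-up time): a positive differentiable
function satisfying `Φ' ≤ 2AΦ^p + BΦ` with `p > 1` which blows up at time `t*` satisfies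
`t* ≥ T := (1/(B(p−1))) log(1 + (B/(2A)) Φ₀^{1−p})`. -/
theorem stmt_0 (p A B tstar Φ₀ T : ℝ) (Φ Φ' : ℝ → ℝ)
    (hp : 1 < p) (hA : 0 < A) (hB : 0 < B) (htstar : 0 < tstar)
    (hdiff : ∀ t ∈ Ico (0 : ℝ) tstar, HasDerivAt Φ (Φ' t) t)
    (hpos : ∀ t ∈ Ico (0 : ℝ) tstar, 0 < Φ t)
    (hΦ₀ : Φ 0 = Φ₀) (hΦ₀pos : 0 < Φ₀)
    (hineq : ∀ t ∈ Ico (0 : ℝ) tstar, Φ' t ≤ 2 * A * Φ t ^ p + B * Φ t)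
    (hblow : Tendsto Φ (nhdsWithin tstar (Iio tstar)) atTop)
    (hT : T = 1 / (B * (p - 1)) * Real.log (1 + B / (2 * A) * Φ₀ ^ (1 - p))) :
    T ≤ tstar := by
  have hp1 : 0 < p - 1 := by linarith
  set g : ℝ → ℝ := fun t => Real.exp ((p-1)*B*t) * (Φ t ^ (1-p) + 2*A/B) with hg
  set D : ℝ → ℝ := fun t =>
      ((p-1)*B*Real.exp ((p-1)*B*t)) * (Φ t ^ (1-p) + 2*A/B)
        + Real.exp ((p-1)*B*t) * (Φ' t * (1-p) * Φ t ^ (1-p-1)) with hD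
  have hgderiv : ∀ t ∈ Ico (0:ℝ) tstar, HasDerivAt g (D t) t := by
    intro t ht
    have h0 : HasDerivAt (fun t : ℝ => (p-1)*B*t) ((p-1)*B) t := by
      simpa using (hasDerivAt_id t).const_mul ((p-1)*B)
    have h1 : HasDerivAt (fun t => Real.exp ((p-1)*B*t))
        ((p-1)*B*Real.exp ((p-1)*B*t)) t := by
      simpa [mul_comm] using h0.exp
    have h2 : HasDerivAt (fun t => Φ t ^ (1-p) + 2*A/B)
        (Φ' t * (1-p) * Φ t ^ (1-p-1)) t :=
      (((hdiff t ht).rpow_const (Or.inl (hpos t ht).ne'))).add_const _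
    exact h1.mul h2
  have hderiv_nonneg : ∀ t ∈ Ico (0:ℝ) tstar, 0 ≤ D t := by
    intro t ht
    have hΦ := hpos t ht
    have hE : 0 < Real.exp ((p-1)*B*t) := Real.exp_pos _
    have key : Φ' t * Φ t ^ (-p) ≤ 2*A + B * Φ t ^ (1-p) := by
      have hmul : Φ' t * Φ t ^ (-p) ≤ (2*A*Φ t ^ p + B*Φ t) * Φ t ^ (-p) :=
        mul_le_mul_of_nonneg_right (hineq t ht) (Real.rpow_nonneg hΦ.le _)
      have h1 : Φ t ^ p * Φ t ^ (-p) = 1 := by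
        rw [← Real.rpow_add hΦ]; simp
      have h2 : Φ t * Φ t ^ (-p) = Φ t ^ (1-p) := by
        rw [Real.rpow_sub hΦ, Real.rpow_one, Real.rpow_neg hΦ.le, div_eq_mul_inv]
      have hrhs : (2*A*Φ t ^ p + B*Φ t) * Φ t ^ (-p) = 2*A + B * Φ t ^ (1-p) := by
        rw [add_mul, mul_assoc (2*A), h1, mul_assoc B, h2]; ring
      linarith [hrhs ▸ hmul]
    have hexp : (1 - p - 1 : ℝ) = -p := by ring
    have hexpr : D t = Real.exp ((p-1)*B*t) * (p-1) *
        (B * Φ t ^ (1-p) + 2*A - Φ' t * Φ t ^ (-p)) := by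
      rw [hD]
      simp only [hexp]
      field_simp
      ring
    rw [hexpr]
    have : 0 ≤ B * Φ t ^ (1-p) + 2*A - Φ' t * Φ t ^ (-p) := by linarith
    positivity
  have hmono : MonotoneOn g (Ico 0 tstar) := by
    apply monotoneOn_of_deriv_nonneg (convex_Ico 0 tstar)
    · intro t ht
      exact ((hgderiv t ht).continuousAt).continuousWithinAt
    · intro t ht
      rw [interior_Ico] at ht
      exact (hgderiv t (Ioo_subset_Ico_self ht)).differentiableAt.differentiableWithinAt
    · intro t ht
      rw [interior_Ico] at ht
      rw [(hgderiv t (Ioo_subset_Ico_self ht)).deriv]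
      exact hderiv_nonneg t (Ioo_subset_Ico_self ht)
  have hg0 : g 0 = Φ₀ ^ (1-p) + 2*A/B := by simp [hg, hΦ₀]
  have hlim : Tendsto g (nhdsWithin tstar (Iio tstar))
      (nhds (Real.exp ((p-1)*B*tstar) * (0 + 2*A/B))) := by
    apply Tendsto.mul
    · have : Tendsto (fun t => Real.exp ((p-1)*B*t)) (nhds tstar)
          (nhds (Real.exp ((p-1)*B*tstar))) :=
        (Real.continuous_exp.comp (continuous_const.mul continuous_id)).tendsto tstar
      exact this.mono_left nhdsWithin_le_nhds
    · have h0 : Tendsto (fun x : ℝ => x ^ (1-p)) atTop (nhds 0) := by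
        have := tendsto_rpow_neg_atTop hp1
        simpa [neg_sub] using this
      exact (h0.comp hblow).add tendsto_const_nhds
  have hev : ∀ᶠ t in nhdsWithin tstar (Iio tstar), Φ₀ ^ (1-p) + 2*A/B ≤ g t := by
    have hmem : Ioo 0 tstar ∈ nhdsWithin tstar (Iio tstar) :=
      Ioo_mem_nhdsLT_of_mem ⟨htstar, le_refl _⟩
    filter_upwards [hmem] with t ht
    have ht' : t ∈ Ico 0 tstar := ⟨ht.1.le, ht.2⟩
    have := hmono ⟨le_refl 0, htstar⟩ ht' ht.1.le
    rwa [hg0] at this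
  have hle : Φ₀ ^ (1-p) + 2*A/B ≤ Real.exp ((p-1)*B*tstar) * (0 + 2*A/B) :=
    ge_of_tendsto hlim hev
  rw [zero_add] at hle
  have h2A : 0 < 2*A := by linarith
  have hE : 1 + B/(2*A)*Φ₀ ^ (1-p) ≤ Real.exp ((p-1)*B*tstar) := by
    have hm := mul_le_mul_of_nonneg_right hle (le_of_lt (div_pos hB h2A))
    calc 1 + B/(2*A)*Φ₀ ^ (1-p) = (Φ₀ ^ (1-p) + 2*A/B) * (B/(2*A)) := by
          field_simp; ring
      _ ≤ (Real.exp ((p-1)*B*tstar) * (2*A/B)) * (B/(2*A)) := hm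
      _ = Real.exp ((p-1)*B*tstar) := by field_simp
  have hposlog : (0:ℝ) < 1 + B/(2*A)*Φ₀ ^ (1-p) := by positivity
  have hlog : Real.log (1 + B/(2*A)*Φ₀ ^ (1-p)) ≤ (p-1)*B*tstar := by
    have := Real.log_le_log hposlog hE
    rwa [Real.log_exp] at this
  rw [hT]
  calc 1 / (B * (p-1)) * Real.log (1 + B/(2*A)*Φ₀ ^ (1-p))
      ≤ 1 / (B * (p-1)) * ((p-1)*B*tstar) :=
        mul_le_mul_of_nonneg_left hlog (by positivity)
    _ = tstar := by field_simp
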